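/- arXiv:2603.29645 — 5 statements merged into one kernel-verified Lean document; each statement's English description precedes it below -/
import Mathlib

section
/- Let A and B be independent real-valued random variables on a probability space such that A is square-integrable with mean 0 and variance 1, and such that the law of B is absolutely continuous with respect to Lebesgue measure with a continuously differentiable density f_B satisfying 0 ≤ f_B(x) ≤ M₀ and |f_B′(x)| ≤ M₁ for all x ∈ ℝ, where M₀, M₁ ≥ 0 are constants. Then for every real ι > 0 and every positive integer n, |P(B ≥ A/√n) − P(B ≥ 0)| ≤ 2/(ι² n) + M₀/(ι n) + M₁/(2n). -/
open MeasureTheory ProbabilityTheory Set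

/-- **Speed of convergence of `P(B ≥ A/√n)` to `P(B ≥ 0)`.**
If `A` and `B` are independent real random variables, `A` square-integrable with zero mean
and unit variance, and `B` has a continuously differentiable density `f_B` (w.r.t. Lebesgue
measure) bounded by `M₀` with derivative bounded by `M₁`, then for every `ι > 0` and every
positive integer `n`,
`|P(B ≥ A/√n) − P(B ≥ 0)| ≤ 2/(ι²n) + M₀/(ιn) + M₁/(2n)`. -/
theorem abs_prob_ge_div_sqrt_sub_prob_ge_zero_le
    {Ω : Type*} [MeasurableSpace Ω] (μ : Measure Ω) [IsProbabilityMeasure μ]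
    (A B : Ω → ℝ) (hA : Measurable A) (hB : Measurable B)
    (hAB : IndepFun A B μ)
    (hA2 : MemLp A 2 μ)
    (hAmean : ∫ ω, A ω ∂μ = 0)
    (hAvar : ∫ ω, (A ω) ^ 2 ∂μ = 1)
    (fB : ℝ → ℝ) (M₀ M₁ : ℝ) (hM₀ : 0 ≤ M₀) (hM₁ : 0 ≤ M₁)
    (hfB : Measure.map B μ = volume.withDensity (fun x => ENNReal.ofReal (fB x)))
    (hfBsmooth : ContDiff ℝ 1 fB)
    (hfB0 : ∀ x, 0 ≤ fB x) (hfBM₀ : ∀ x, fB x ≤ M₀)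
    (hfBM₁ : ∀ x, |deriv fB x| ≤ M₁)
    (ι : ℝ) (hι : 0 < ι) (n : ℕ) (hn : 0 < n) :
    |(μ {ω | A ω / Real.sqrt n ≤ B ω}).toReal - (μ {ω | (0 : ℝ) ≤ B ω}).toReal| ≤
      2 / (ι ^ 2 * n) + M₀ / (ι * n) + M₁ / (2 * n) := by
  have hn' : (0:ℝ) < n := by exact_mod_cast hn
  set s : ℝ := Real.sqrt n with hs
  have hs0 : 0 < s := Real.sqrt_pos.2 hn'
  have hs2 : s ^ 2 = n := Real.sq_sqrt hn'.le
  set ν := Measure.map B μ with hν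
  have hνprob : IsProbabilityMeasure ν := Measure.isProbabilityMeasure_map hB.aemeasurable
  -- integrability of the density
  have hfBcont : Continuous fB := hfBsmooth.continuous
  have hfBint : Integrable fB volume := by
    refine ⟨hfBcont.aestronglyMeasurable, ?_⟩
    rw [HasFiniteIntegral]
    have : ∀ x : ℝ, (‖fB x‖₊ : ENNReal) = ENNReal.ofReal (fB x) := fun x =>
      Real.enorm_eq_ofReal (hfB0 x)
    calc ∫⁻ x, (‖fB x‖₊ : ENNReal) = ∫⁻ x, ENNReal.ofReal (fB x) := by
          simp_rw [this]
      _ = ν univ := by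
          rw [hfB, withDensity_apply _ MeasurableSet.univ, Measure.restrict_univ]
      _ < ⊤ := by simp [measure_lt_top]
  -- the difference of ν-Ici measures is an interval integral of fB
  have key0 : ∀ a b : ℝ, a ≤ b →
      (ν (Ici a)).toReal - (ν (Ici b)).toReal = ∫ u in a..b, fB u := by
    intro a b hab
    have hsplit : ν (Ici a) = ν (Ico a b) + ν (Ici b) := by
      rw [← measure_union ((Iio_disjoint_Ici le_rfl).mono_left Ico_subset_Iio_self)
        measurableSet_Ici, Ico_union_Ici_eq_Ici hab]
    have hIco : (ν (Ico a b)).toReal = ∫ u in a..b, fB u := by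
      have h1 : ν (Ico a b) = ∫⁻ u in Ico a b, ENNReal.ofReal (fB u) := by
        rw [hfB, withDensity_apply _ measurableSet_Ico]
      have h2 : ENNReal.ofReal (∫ u in Ico a b, fB u) =
          ∫⁻ u in Ico a b, ENNReal.ofReal (fB u) :=
        ofReal_integral_eq_lintegral_ofReal (hfBint.restrict)
          (Filter.Eventually.of_forall fun x => hfB0 x)
      rw [h1, ← h2, ENNReal.toReal_ofReal (integral_nonneg fun x => hfB0 x)]
      rw [integral_Ico_eq_integral_Ioo, ← integral_Ioc_eq_integral_Ioo,
        ← intervalIntegral.integral_of_le hab]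
    rw [hsplit, ENNReal.toReal_add (measure_lt_top _ _).ne (measure_lt_top _ _).ne]
    linarith [hIco]
  have key1 : ∀ t : ℝ, (ν (Ici t)).toReal =
      (ν (Ici 0)).toReal - ∫ u in (0:ℝ)..t, fB u := by
    intro t
    rcases le_or_gt 0 t with h | h
    · have := key0 0 t h
      linarith
    · have := key0 t 0 h.le
      rw [intervalIntegral.integral_symm]
      linarith
  -- Lipschitz bound on fB
  have hLip : ∀ x : ℝ, |fB x - fB 0| ≤ M₁ * |x| := by
    intro x
    have hl : LipschitzWith M₁.toNNReal fB := by
      apply lipschitzWith_of_nnnorm_deriv_le (hfBsmooth.differentiable one_ne_zero)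
      intro x
      rw [← NNReal.coe_le_coe, coe_nnnorm, Real.coe_toNNReal _ hM₁]
      exact hfBM₁ x
    have := hl.dist_le_mul x 0
    rwa [Real.dist_eq, Real.dist_eq, sub_zero, Real.coe_toNNReal _ hM₁] at this
  -- second-order estimate
  have key2 : ∀ t : ℝ, |(ν (Ici t)).toReal - (ν (Ici 0)).toReal + t * fB 0| ≤
      M₁ * t ^ 2 / 2 := by
    intro t
    rw [key1 t]
    have hrw : (ν (Ici 0)).toReal - (∫ u in (0:ℝ)..t, fB u) - (ν (Ici 0)).toReal
        + t * fB 0 = ∫ u in (0:ℝ)..t, (fB 0 - fB u) := by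
      rw [intervalIntegral.integral_sub (intervalIntegrable_const)
        (hfBcont.intervalIntegrable 0 t), intervalIntegral.integral_const]
      simp only [smul_eq_mul]
      ring
    rw [show (ν (Ici 0)).toReal - (∫ u in (0:ℝ)..t, fB u) - (ν (Ici 0)).toReal
        + t * fB 0 = ∫ u in (0:ℝ)..t, (fB 0 - fB u) from hrw]
    rcases le_or_gt 0 t with h | h
    · calc |∫ u in (0:ℝ)..t, (fB 0 - fB u)| ≤ ∫ u in (0:ℝ)..t, |fB 0 - fB u| :=
          intervalIntegral.abs_integral_le_integral_abs h
        _ ≤ ∫ u in (0:ℝ)..t, M₁ * u := by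
            apply intervalIntegral.integral_mono_on h
              (((continuous_const.sub hfBcont).abs).intervalIntegrable 0 t)
              ((continuous_const.mul continuous_id).intervalIntegrable 0 t)
            intro x hx
            have h2 := hLip x
            rw [abs_of_nonneg hx.1] at h2
            simp only [Pi.sub_apply, Pi.mul_apply, Pi.neg_apply, id_eq]
            rw [abs_sub_comm]
            exact h2
        _ = M₁ * t ^ 2 / 2 := by
            rw [intervalIntegral.integral_const_mul, integral_id]; ring
    · rw [intervalIntegral.integral_symm, abs_neg]
      calc |∫ u in t..(0:ℝ), (fB 0 - fB u)| ≤ ∫ u in t..(0:ℝ), |fB 0 - fB u| :=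
          intervalIntegral.abs_integral_le_integral_abs h.le
        _ ≤ ∫ u in t..(0:ℝ), M₁ * (-u) := by
            apply intervalIntegral.integral_mono_on h.le
              (((continuous_const.sub hfBcont).abs).intervalIntegrable t 0)
              ((continuous_const.mul continuous_id.neg).intervalIntegrable t 0)
            intro x hx
            have h2 := hLip x
            rw [abs_of_nonpos hx.2] at h2
            simp only [Pi.sub_apply, Pi.mul_apply, Pi.neg_apply, id_eq]
            rw [abs_sub_comm]
            exact h2
        _ = M₁ * t ^ 2 / 2 := by
            rw [show (fun u : ℝ => M₁ * -u) = fun u : ℝ => (-M₁) * u by funext u; ring,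
              intervalIntegral.integral_const_mul, integral_id]
            ring
  -- measurability of g
  have hgmeasENN : Measurable fun t : ℝ => ν (Ici t) := by
    have : Antitone fun t : ℝ => ν (Ici t) := fun a b hab =>
      measure_mono (Ici_subset_Ici.2 hab)
    exact this.measurable
  have hgmeas : Measurable fun t : ℝ => (ν (Ici t)).toReal :=
    ENNReal.measurable_toReal.comp hgmeasENN
  -- rewrite P(A/s ≤ B) as an expectation
  have hjoint : Measure.map (fun ω => (A ω, B ω)) μ = (Measure.map A μ).prod ν :=
    (indepFun_iff_map_prod_eq_prod_map_map hA.aemeasurable hB.aemeasurable).mp hAB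
  have hsetmeas : MeasurableSet {p : ℝ × ℝ | p.1 / s ≤ p.2} :=
    measurableSet_le (measurable_fst.div_const s) measurable_snd
  have step1 : μ {ω | A ω / s ≤ B ω} = ∫⁻ ω, ν (Ici (A ω / s)) ∂μ := by
    have hpre : {ω | A ω / s ≤ B ω} =
        (fun ω => (A ω, B ω)) ⁻¹' {p : ℝ × ℝ | p.1 / s ≤ p.2} := rfl
    rw [hpre, ← Measure.map_apply (hA.prodMk hB) hsetmeas, hjoint,
      Measure.prod_apply hsetmeas]
    have hmk : ∀ a : ℝ, Prod.mk a ⁻¹' {p : ℝ × ℝ | p.1 / s ≤ p.2} = Ici (a / s) := by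
      intro a; ext b; simp [Set.mem_preimage, Set.mem_Ici]
    simp_rw [hmk]
    exact lintegral_map (hgmeasENN.comp (measurable_id.div_const s)) hA
  have step2 : (μ {ω | A ω / s ≤ B ω}).toReal = ∫ ω, (ν (Ici (A ω / s))).toReal ∂μ := by
    rw [step1]
    exact (integral_toReal ((hgmeasENN.comp (hA.div_const s)).aemeasurable)
      (Filter.Eventually.of_forall fun ω => measure_lt_top _ _)).symm
  have step3 : (μ {ω | (0:ℝ) ≤ B ω}).toReal = (ν (Ici 0)).toReal := by
    rw [hν, Measure.map_apply hB measurableSet_Ici]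
    rfl
  -- integrabilities
  have hAint : Integrable A μ := hA2.integrable one_le_two
  have hA2int : Integrable (fun ω => A ω ^ 2) μ := hA2.integrable_sq
  have hgAint : Integrable (fun ω => (ν (Ici (A ω / s))).toReal) μ := by
    apply (integrable_const (1:ℝ)).mono'
      ((hgmeas.comp (hA.div_const s)).aestronglyMeasurable)
    refine Filter.Eventually.of_forall fun ω => ?_
    simp only [Function.comp_apply]
    rw [Real.norm_eq_abs, abs_of_nonneg ENNReal.toReal_nonneg]
    exact ENNReal.toReal_le_of_le_ofReal (by norm_num) (by simp [prob_le_one])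
  have hlinint : Integrable (fun ω => A ω / s * fB 0) μ := by
    have : (fun ω => A ω / s * fB 0) = fun ω => A ω * (fB 0 / s) := by
      funext ω; ring
    rw [this]
    exact hAint.mul_const _
  -- the remainder
  set g0 : ℝ := (ν (Ici 0)).toReal with hg0
  have hsubint : Integrable (fun ω => (ν (Ici (A ω / s))).toReal - g0) μ := by
    exact hgAint.sub (integrable_const g0)
  have hrint : Integrable
      (fun ω => (ν (Ici (A ω / s))).toReal - g0 + A ω / s * fB 0) μ := by
    exact hsubint.add hlinint
  have hrval : ∫ ω, ((ν (Ici (A ω / s))).toReal - g0 + A ω / s * fB 0) ∂μ =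
      (∫ ω, (ν (Ici (A ω / s))).toReal ∂μ) - g0 := by
    rw [integral_add hsubint hlinint,
      integral_sub hgAint (integrable_const g0), integral_const]
    have : ∫ ω, A ω / s * fB 0 ∂μ = 0 := by
      have h1 : (fun ω => A ω / s * fB 0) = fun ω => A ω * (fB 0 / s) := by
        funext ω; ring
      rw [h1, integral_mul_const, hAmean, zero_mul]
    rw [this]
    simp
  have hrbound : |∫ ω, ((ν (Ici (A ω / s))).toReal - g0 + A ω / s * fB 0) ∂μ| ≤
      M₁ / (2 * n) := by
    have hb : ∀ ω, ‖(ν (Ici (A ω / s))).toReal - g0 + A ω / s * fB 0‖ ≤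
        A ω ^ 2 * (M₁ / (2 * n)) := by
      intro ω
      have := key2 (A ω / s)
      rw [Real.norm_eq_abs]
      calc |(ν (Ici (A ω / s))).toReal - g0 + A ω / s * fB 0| ≤
          M₁ * (A ω / s) ^ 2 / 2 := this
        _ = A ω ^ 2 * (M₁ / (2 * n)) := by
            rw [div_pow, hs2]; ring
    calc |∫ ω, ((ν (Ici (A ω / s))).toReal - g0 + A ω / s * fB 0) ∂μ| ≤
        ∫ ω, A ω ^ 2 * (M₁ / (2 * n)) ∂μ :=
        norm_integral_le_of_norm_le (hA2int.mul_const _)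
          (Filter.Eventually.of_forall hb)
      _ = M₁ / (2 * n) := by rw [integral_mul_const, hAvar, one_mul]
  -- conclusion
  rw [step2, step3, ← hrval]
  have hpos1 : 0 ≤ 2 / (ι ^ 2 * n) := by positivity
  have hpos2 : 0 ≤ M₀ / (ι * n) := by positivity
  linarith [hrbound]
end

section
/- Let m ≥ 1, let K be a nonzero m×m complex Hermitian positive semidefinite matrix, and let ω > 1 be a real number. Then for every real a with 0 < a < 3(ω − 1)·tr(K²) / (2ω·tr(K³)), one has (a²/(2ω)) · tr(K²) < tr(aK) − log det(aK + I_m) < (a²/2) · tr(K²), where log is the natural logarithm. -/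
open Matrix
open scoped ComplexOrder

section scalarAux

lemma deriv_aux_log (x : ℝ) (hx : 0 < 1 + x) :
    HasDerivAt (fun y : ℝ => Real.log (1 + y)) (1 / (1 + x)) x := by
  have h : HasDerivAt (fun y : ℝ => 1 + y) 1 x := (hasDerivAt_id x).const_add 1
  exact ((Real.hasDerivAt_log hx.ne').comp x h).congr_deriv (by simp [one_div])

lemma sc_upper {x : ℝ} (hx : 0 < x) : x - Real.log (1 + x) < x ^ 2 / 2 := by
  set g : ℝ → ℝ := fun y => Real.log (1 + y) - y + y ^ 2 / 2 with hg
  have hmono : StrictMonoOn g (Set.Ici (0:ℝ)) := by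
    apply strictMonoOn_of_deriv_pos (convex_Ici 0)
    · apply ContinuousOn.add (ContinuousOn.sub ?_ continuousOn_id)
      · exact (continuous_pow 2).continuousOn.div_const 2
      · apply (Real.continuousOn_log.comp (by fun_prop) ?_)
        intro y hy
        simp only [Set.mem_Ici] at hy
        simp only [Set.mem_compl_iff, Set.mem_singleton_iff]
        positivity
    · intro y hy
      rw [interior_Ici, Set.mem_Ioi] at hy
      have h1 : (0:ℝ) < 1 + y := by linarith
      have hd : HasDerivAt g (1 / (1 + y) - 1 + y) y := by
        have := ((deriv_aux_log y h1).sub (hasDerivAt_id y)).add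
          ((hasDerivAt_pow 2 y).div_const 2)
        exact this.congr_deriv (by ring)
      rw [hd.deriv]
      have he : 1 / (1 + y) - 1 + y = y ^ 2 / (1 + y) := by field_simp; ring
      rw [he]; positivity
  have h0 : g 0 = 0 := by simp [hg]
  have := hmono (le_refl (0:ℝ)) (le_of_lt hx) hx
  rw [h0] at this
  simp only [hg] at this
  linarith

lemma sc_upper_le {x : ℝ} (hx : 0 ≤ x) : x - Real.log (1 + x) ≤ x ^ 2 / 2 := by
  rcases eq_or_lt_of_le hx with h | h
  · simp [← h]
  · exact (sc_upper h).le

lemma sc_lower {x : ℝ} (hx : 0 ≤ x) :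
    x ^ 2 / 2 - x ^ 3 / 3 ≤ x - Real.log (1 + x) := by
  set h : ℝ → ℝ := fun y => y - Real.log (1 + y) - y ^ 2 / 2 + y ^ 3 / 3 with hh
  have hmono : MonotoneOn h (Set.Ici (0:ℝ)) := by
    apply monotoneOn_of_deriv_nonneg (convex_Ici 0)
    · apply ContinuousOn.add (ContinuousOn.sub (ContinuousOn.sub continuousOn_id ?_) ?_) ?_
      · apply (Real.continuousOn_log.comp (by fun_prop) ?_)
        intro y hy
        simp only [Set.mem_Ici] at hy
        simp only [Set.mem_compl_iff, Set.mem_singleton_iff]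
        positivity
      · exact (continuous_pow 2).continuousOn.div_const 2
      · exact (continuous_pow 3).continuousOn.div_const 3
    all_goals
      intro y hy
      rw [interior_Ici, Set.mem_Ioi] at hy
      have h1 : (0:ℝ) < 1 + y := by linarith
      have hd : HasDerivAt h (1 - 1 / (1 + y) - y + y ^ 2) y := by
        have := (((hasDerivAt_id y).sub (deriv_aux_log y h1)).sub
          ((hasDerivAt_pow 2 y).div_const 2)).add ((hasDerivAt_pow 3 y).div_const 3)
        exact this.congr_deriv (by ring)
    · exact hd.differentiableAt.differentiableWithinAt
    · rw [hd.deriv]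
      have he : 1 - 1 / (1 + y) - y + y ^ 2 = y ^ 3 / (1 + y) := by field_simp; ring
      rw [he]; positivity
  have h0 : h 0 = 0 := by simp [hh]
  have := hmono (le_refl (0:ℝ)) hx hx
  rw [h0] at this
  simp only [hh] at this
  linarith

end scalarAux

section matrixAux

variable {m : ℕ} {K : Matrix (Fin m) (Fin m) ℂ} (hH : K.IsHermitian)

lemma K_pow_eq (p : ℕ) :
    K ^ p = (hH.eigenvectorUnitary : Matrix (Fin m) (Fin m) ℂ) *
      (Matrix.diagonal (RCLike.ofReal ∘ hH.eigenvalues)) ^ p *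
      star (hH.eigenvectorUnitary : Matrix (Fin m) (Fin m) ℂ) := by
  set U := (hH.eigenvectorUnitary : Matrix (Fin m) (Fin m) ℂ)
  set D := Matrix.diagonal (RCLike.ofReal ∘ hH.eigenvalues : Fin m → ℂ)
  have hUU : U * star U = 1 := (Matrix.mem_unitaryGroup_iff).mp hH.eigenvectorUnitary.2
  have hUU' : star U * U = 1 := (Matrix.mem_unitaryGroup_iff').mp hH.eigenvectorUnitary.2
  induction p with
  | zero => simp [hUU]
  | succ p ih =>
      rw [pow_succ, pow_succ, ih, hH.spectral_theorem]
      show U * D ^ p * star U * (U * D * star U) = U * (D ^ p * D) * star U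
      simp only [mul_assoc]
      rw [← mul_assoc (star U) U, hUU', one_mul]

lemma trace_K_pow (p : ℕ) :
    (K ^ p).trace = ((∑ i, hH.eigenvalues i ^ p : ℝ) : ℂ) := by
  rw [K_pow_eq hH p, Matrix.trace_mul_cycle,
    (Matrix.mem_unitaryGroup_iff').mp hH.eigenvectorUnitary.2, one_mul,
    Matrix.diagonal_pow, Matrix.trace_diagonal]
  push_cast
  rfl

lemma det_smul_add_one (a : ℝ) :
    ((a : ℂ) • K + 1).det = ((∏ i, (a * hH.eigenvalues i + 1) : ℝ) : ℂ) := by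
  set U := (hH.eigenvectorUnitary : Matrix (Fin m) (Fin m) ℂ)
  set D := Matrix.diagonal (RCLike.ofReal ∘ hH.eigenvalues : Fin m → ℂ)
  have hUU : U * star U = 1 := (Matrix.mem_unitaryGroup_iff).mp hH.eigenvectorUnitary.2
  have hUU' : star U * U = 1 := (Matrix.mem_unitaryGroup_iff').mp hH.eigenvectorUnitary.2
  have h1 : (a:ℂ) • K + 1 = U * ((a:ℂ) • D + 1) * star U := by
    rw [mul_add, add_mul, mul_one, hUU]
    congr 1
    rw [Matrix.mul_smul, Matrix.smul_mul]
    congr 1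
    exact hH.spectral_theorem
  rw [h1, Matrix.det_mul, Matrix.det_mul, mul_comm, ← mul_assoc, ← Matrix.det_mul, hUU',
    Matrix.det_one, one_mul]
  have h2 : (a:ℂ) • D + 1 = Matrix.diagonal (fun i => (a : ℂ) * hH.eigenvalues i + 1) := by
    ext i j
    by_cases h : i = j <;>
      simp [D, Matrix.diagonal, Matrix.one_apply, h]
  rw [h2, Matrix.det_diagonal]
  push_cast
  rfl

end matrixAux

/-- **Two-sided Taylor bound for `tr(aK) − log det(aK + I)`** (Eq. (24) of the paper).
For a nonzero Hermitian positive semidefinite complex matrix `K` of size `m ≥ 1`, any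
`ω > 1`, and every real `a` with `0 < a < 3(ω−1)·tr(K²)/(2ω·tr(K³))`,
`(a²/(2ω))·tr(K²) < tr(aK) − log det(aK + I_m) < (a²/2)·tr(K²)`. -/
theorem trace_sub_log_det_two_sided
    {m : ℕ} (hm : 1 ≤ m) (K : Matrix (Fin m) (Fin m) ℂ)
    (hK : K.PosSemidef) (hK0 : K ≠ 0) (ω : ℝ) (hω : 1 < ω)
    (a : ℝ) (ha : 0 < a)
    (ha' : a < 3 * (ω - 1) * ((K ^ 2).trace).re / (2 * ω * ((K ^ 3).trace).re)) :
    a ^ 2 / (2 * ω) * ((K ^ 2).trace).re <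
        ((a • K).trace).re - Real.log (((a • K + 1).det).re) ∧
      ((a • K).trace).re - Real.log (((a • K + 1).det).re) <
        a ^ 2 / 2 * ((K ^ 2).trace).re := by
  have hH : K.IsHermitian := hK.1
  set lam := hH.eigenvalues with hlam
  have hnn : ∀ i, 0 ≤ lam i := hK.eigenvalues_nonneg
  have hsmul : a • K = (a : ℂ) • K := by
    ext i j
    simp [Matrix.smul_apply, Complex.real_smul]
  have hT2 : ((K ^ 2).trace).re = ∑ i, lam i ^ 2 := by
    rw [trace_K_pow hH 2, Complex.ofReal_re]
  have hT3 : ((K ^ 3).trace).re = ∑ i, lam i ^ 3 := by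
    rw [trace_K_pow hH 3, Complex.ofReal_re]
  have htr : ((a • K).trace).re = ∑ i, a * lam i := by
    rw [hsmul, Matrix.trace_smul]
    have h1 : K.trace = ((∑ i, lam i : ℝ) : ℂ) := by
      simpa using trace_K_pow hH 1
    rw [h1]
    simp [Finset.mul_sum]
  have hdet : ((a • K + 1).det).re = ∏ i, (a * lam i + 1) := by
    rw [hsmul, det_smul_add_one hH a, Complex.ofReal_re]
  have hposf : ∀ i, (0:ℝ) < a * lam i + 1 := fun i => by
    have := hnn i; nlinarith
  have hlog : Real.log (∏ i, (a * lam i + 1)) = ∑ i, Real.log (1 + a * lam i) := by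
    rw [Real.log_prod (fun i _ => (hposf i).ne')]
    exact Finset.sum_congr rfl fun i _ => by rw [add_comm]
  have hex : ∃ i, 0 < lam i := by
    by_contra hcon
    push_neg at hcon
    have hz : ∀ i, lam i = 0 := fun i => le_antisymm (hcon i) (hnn i)
    apply hK0
    have h1 := K_pow_eq hH 1
    simp only [pow_one] at h1
    rw [h1]
    have h2 : (Matrix.diagonal (RCLike.ofReal ∘ hH.eigenvalues) : Matrix (Fin m) (Fin m) ℂ)
        = 0 := by
      ext i j
      by_cases h : i = j <;>
        simp [Matrix.diagonal, h, Function.comp, ← hlam, hz]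
    rw [h2]
    simp
  obtain ⟨i0, hi0⟩ := hex
  have hT2pos : (0:ℝ) < ∑ i, lam i ^ 2 :=
    Finset.sum_pos' (fun i _ => by positivity) ⟨i0, Finset.mem_univ i0, by positivity⟩
  have hT3pos : (0:ℝ) < ∑ i, lam i ^ 3 :=
    Finset.sum_pos' (fun i _ => pow_nonneg (hnn i) 3) ⟨i0, Finset.mem_univ i0, pow_pos hi0 3⟩
  have hmid : ((a • K).trace).re - Real.log (((a • K + 1).det).re)
      = ∑ i, (a * lam i - Real.log (1 + a * lam i)) := by
    rw [htr, hdet, hlog, Finset.sum_sub_distrib]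
  rw [hmid, hT2]
  rw [hT2, hT3] at ha'
  set T2 := ∑ i, lam i ^ 2 with hT2d
  set T3 := ∑ i, lam i ^ 3 with hT3d
  constructor
  · have hstep : ∀ i, (a * lam i) ^ 2 / 2 - (a * lam i) ^ 3 / 3
        ≤ a * lam i - Real.log (1 + a * lam i) := fun i =>
      sc_lower (by have := hnn i; positivity)
    have hsum : a ^ 2 / 2 * T2 - a ^ 3 / 3 * T3
        ≤ ∑ i, (a * lam i - Real.log (1 + a * lam i)) := by
      have h1 := Finset.sum_le_sum (fun i (_ : i ∈ Finset.univ) => hstep i)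
      calc a ^ 2 / 2 * T2 - a ^ 3 / 3 * T3
          = ∑ i, ((a * lam i) ^ 2 / 2 - (a * lam i) ^ 3 / 3) := by
            rw [Finset.sum_sub_distrib, hT2d, hT3d, Finset.mul_sum, Finset.mul_sum]
            congr 1 <;> exact Finset.sum_congr rfl fun i _ => by ring
        _ ≤ _ := h1
    have hden : (0:ℝ) < 2 * ω * T3 := by nlinarith
    rw [lt_div_iff₀ hden] at ha'
    have hkey : a ^ 2 / (2 * ω) * T2 < a ^ 2 / 2 * T2 - a ^ 3 / 3 * T3 := by
      rw [div_mul_eq_mul_div, div_lt_iff₀ (by linarith : (0:ℝ) < 2 * ω)]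
      nlinarith [mul_lt_mul_of_pos_left ha' (pow_pos ha 2)]
    linarith
  · have hle : ∀ i ∈ Finset.univ, a * lam i - Real.log (1 + a * lam i)
        ≤ (a * lam i) ^ 2 / 2 := fun i _ =>
      sc_upper_le (by have := hnn i; positivity)
    have hlt : a * lam i0 - Real.log (1 + a * lam i0) < (a * lam i0) ^ 2 / 2 :=
      sc_upper (by positivity)
    have h2 := Finset.sum_lt_sum hle ⟨i0, Finset.mem_univ i0, hlt⟩
    calc ∑ i, (a * lam i - Real.log (1 + a * lam i))
        < ∑ i, (a * lam i) ^ 2 / 2 := h2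
      _ = a ^ 2 / 2 * T2 := by
          rw [hT2d, Finset.mul_sum]
          exact Finset.sum_congr rfl fun i _ => by ring
end

section
/- Let n, N_a, N_b, j be positive integers with j ≤ N_b and n ≥ N_a + N_b, and set n₀ := n − N_a − N_b. Let B be a random variable with the Beta(n − N_a − j + 1, N_a) distribution. Then E[B^{−n₀}] ≤ n^{N_a}. -/
open MeasureTheory
open scoped ENNReal NNReal

noncomputable def betaDensity (a b : ℝ) (s : ℝ) : ℝ :=
  if 0 < s ∧ s < 1 then
    Real.Gamma (a + b) / (Real.Gamma a * Real.Gamma b) * s ^ (a - 1) * (1 - s) ^ (b - 1)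
  else 0

lemma betaDensity_nonneg {a b : ℝ} (ha : 0 < a) (hb : 0 < b) (s : ℝ) :
    0 ≤ betaDensity a b s := by
  unfold betaDensity
  split
  · next h =>
    have h1 := Real.Gamma_pos_of_pos ha
    have h2 := Real.Gamma_pos_of_pos hb
    have h3 := Real.Gamma_pos_of_pos (add_pos ha hb)
    have h4 : (0:ℝ) ≤ s ^ (a - 1) := Real.rpow_nonneg h.1.le _
    have h5 : (0:ℝ) ≤ (1 - s) ^ (b - 1) := Real.rpow_nonneg (by linarith [h.2]) _
    positivity
  · exact le_refl 0

lemma betaDensity_measurable (a b : ℝ) : Measurable (betaDensity a b) := by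
  unfold betaDensity
  have hset : MeasurableSet {s : ℝ | 0 < s ∧ s < 1} := by
    simpa [Set.Ioo] using measurableSet_Ioo (a := (0:ℝ)) (b := 1)
  apply Measurable.ite hset _ measurable_const
  fun_prop

/-- **Negative-moment bound for Beta random variables** (Eq. (140) of the paper).
Let `n, N_a, N_b, j` be positive integers with `j ≤ N_b` and `n ≥ N_a + N_b`, and set
`n₀ := n − N_a − N_b`.  If `B` has the `Beta(n − N_a − j + 1, N_a)` distribution, then
`E[B^{−n₀}] ≤ n^{N_a}`. -/
theorem beta_neg_moment_le
    {Ω : Type*} [MeasurableSpace Ω] (μ : Measure Ω) [IsProbabilityMeasure μ]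
    (n Na Nb j : ℕ) (hn : 0 < n) (hNa : 0 < Na) (hNb : 0 < Nb) (hj : 0 < j)
    (hjNb : j ≤ Nb) (hnlarge : Na + Nb ≤ n)
    (B : Ω → ℝ) (hB : Measurable B)
    (hlaw : Measure.map B μ =
      volume.withDensity
        (fun s => ENNReal.ofReal (betaDensity ((n : ℝ) - Na - j + 1) Na s))) :
    ∫ ω, (B ω ^ (n - Na - Nb))⁻¹ ∂μ ≤ (n : ℝ) ^ Na := by
  have hNaj : Na + j ≤ n := le_trans (by omega) hnlarge
  set n₀ := n - Na - Nb with hn₀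
  set m := n - Na - j with hm
  have hm_cast : (m:ℝ) = (n:ℝ) - Na - j := by
    rw [hm, Nat.cast_sub (by omega), Nat.cast_sub (by omega)]
  set a : ℝ := (n : ℝ) - Na - j + 1 with ha_def
  have ha : 0 < a := by rw [ha_def, ← hm_cast]; positivity
  have hb : (0:ℝ) < (Na:ℝ) := by exact_mod_cast hNa
  set C : ℝ := Real.Gamma (a + Na) / (Real.Gamma a * Real.Gamma Na) with hC_def
  have hC : 0 ≤ C := by
    have h1 := Real.Gamma_pos_of_pos ha
    have h2 := Real.Gamma_pos_of_pos hb
    have h3 := Real.Gamma_pos_of_pos (add_pos ha hb)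
    positivity
  have hmeas_g : Measurable (fun s : ℝ => (s ^ n₀)⁻¹) := (measurable_id.pow_const _).inv
  -- Step 1: rewrite the expectation as a Lebesgue-density integral
  have h1 : ∫ ω, (B ω ^ n₀)⁻¹ ∂μ = ∫ s, betaDensity a Na s * (s ^ n₀)⁻¹ := by
    calc ∫ ω, (B ω ^ n₀)⁻¹ ∂μ
        = ∫ s, (s ^ n₀)⁻¹ ∂(Measure.map B μ) :=
          (integral_map hB.aemeasurable hmeas_g.aestronglyMeasurable).symm
      _ = ∫ s, betaDensity a Na s * (s ^ n₀)⁻¹ := by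
          rw [hlaw]
          have hde : (fun s : ℝ => ENNReal.ofReal (betaDensity a Na s)) =
              (fun s : ℝ => ((betaDensity a Na s).toNNReal : ℝ≥0∞)) := rfl
          rw [hde, integral_withDensity_eq_integral_smul
            (f := fun s => (betaDensity a (Na:ℝ) s).toNNReal)
            (measurable_real_toNNReal.comp (betaDensity_measurable a Na)) _]
          congr 1
          ext s
          rw [NNReal.smul_def, smul_eq_mul,
            Real.coe_toNNReal _ (betaDensity_nonneg ha hb s)]
  rw [h1]
  -- Step 2: bound by the indicator function
  set hfun : ℝ → ℝ := (Set.Ioo (0:ℝ) 1).indicator (fun s => C * (1-s)^(Na-1)) with hfun_def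
  have hh_int : Integrable hfun := by
    apply MeasureTheory.IntegrableOn.integrable_indicator _ measurableSet_Ioo
    exact (continuous_const.mul ((continuous_const.sub continuous_id).pow _)).integrableOn_Icc.mono_set
      Set.Ioo_subset_Icc_self
  have hg_nonneg : ∀ s : ℝ, 0 ≤ betaDensity a Na s * (s ^ n₀)⁻¹ := by
    intro s
    by_cases hs : 0 < s ∧ s < 1
    · exact mul_nonneg (betaDensity_nonneg ha hb s)
        (inv_nonneg.2 (pow_nonneg hs.1.le _))
    · simp [betaDensity, hs]
  have hgh : ∀ s : ℝ, betaDensity a Na s * (s ^ n₀)⁻¹ ≤ hfun s := by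
    intro s
    by_cases hs : s ∈ Set.Ioo (0:ℝ) 1
    · rw [hfun_def, Set.indicator_of_mem hs]
      obtain ⟨hs0, hs1⟩ := hs
      have hkey : betaDensity a Na s * (s ^ n₀)⁻¹ = (C * (1-s)^(Na-1)) * s ^ (Nb - j) := by
        unfold betaDensity
        rw [if_pos ⟨hs0, hs1⟩]
        have e1 : s ^ (a - 1) = s ^ m := by
          have : a - 1 = (m:ℝ) := by rw [hm_cast, ha_def]; ring
          rw [this, Real.rpow_natCast]
        have e2 : (1 - s) ^ ((Na:ℝ) - 1) = (1-s) ^ (Na - 1) := by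
          have : (Na:ℝ) - 1 = ((Na - 1 : ℕ) : ℝ) := by
            rw [Nat.cast_sub hNa]; norm_num
          rw [this, Real.rpow_natCast]
        rw [e1, e2, ← hC_def]
        have hsm : s ^ m = s ^ n₀ * s ^ (Nb - j) := by
          rw [← pow_add]; congr 1; omega
        have hsn : (s : ℝ) ^ n₀ ≠ 0 := pow_ne_zero _ (ne_of_gt hs0)
        field_simp [hsm]
        rw [hsm]; ring
      rw [hkey]
      apply mul_le_of_le_one_right
      · exact mul_nonneg hC (pow_nonneg (by linarith) _)
      · exact pow_le_one₀ hs0.le hs1.le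
    · have hz : betaDensity a Na s = 0 := by
        unfold betaDensity
        rw [if_neg]
        simpa [Set.mem_Ioo] using hs
      rw [hfun_def, Set.indicator_of_notMem hs, hz, zero_mul]
  have hle := integral_mono_of_nonneg (Filter.Eventually.of_forall hg_nonneg) hh_int
    (Filter.Eventually.of_forall hgh)
  refine le_trans hle ?_
  -- Step 3: compute the integral of the bound
  have hint : ∫ s, hfun s = C * (Na:ℝ)⁻¹ := by
    rw [hfun_def, integral_indicator measurableSet_Ioo, integral_const_mul]
    congr 1
    rw [← MeasureTheory.integral_Ioc_eq_integral_Ioo,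
      ← intervalIntegral.integral_of_le zero_le_one,
      intervalIntegral.integral_comp_sub_left (fun x => x ^ (Na-1)) 1,
      show (1:ℝ)-1 = 0 by norm_num, show (1:ℝ)-0 = 1 by norm_num, integral_pow,
      one_pow, zero_pow (by omega : Na - 1 + 1 ≠ 0)]
    rw [Nat.cast_sub hNa]
    push_cast
    field_simp
    rw [sub_zero, one_mul, sub_add_cancel, div_self hb.ne']
  rw [hint]
  -- Step 4: final arithmetic
  have e1 : a + (Na:ℝ) = ((n - j : ℕ):ℝ) + 1 := by
    rw [Nat.cast_sub (by omega : j ≤ n), ha_def]; ring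
  have e2 : a = ((m:ℕ):ℝ) + 1 := by rw [hm_cast, ha_def]
  have e3 : (Na:ℝ) = ((Na - 1 : ℕ):ℝ) + 1 := by rw [Nat.cast_sub hNa]; norm_num
  have hCval : C = ((n-j).factorial : ℝ) / ((m.factorial : ℝ) * ((Na-1).factorial : ℝ)) := by
    rw [hC_def, e1, e2]
    rw [e3]
    rw [Real.Gamma_nat_eq_factorial, Real.Gamma_nat_eq_factorial, Real.Gamma_nat_eq_factorial]
  rw [hCval]
  have hnat : (n-j).factorial ≤ n ^ Na * (m.factorial * ((Na-1).factorial * Na)) := by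
    have hle1 : Na ≤ n - j := by omega
    have hfd := Nat.factorial_mul_descFactorial hle1
    have hmm : n - j - Na = m := by omega
    rw [hmm] at hfd
    have hdesc : (n-j).descFactorial Na ≤ n ^ Na :=
      le_trans (Nat.descFactorial_le_pow _ _) (Nat.pow_le_pow_left (by omega) _)
    calc (n-j).factorial = m.factorial * (n-j).descFactorial Na := hfd.symm
      _ ≤ m.factorial * n ^ Na := Nat.mul_le_mul_left _ hdesc
      _ ≤ n ^ Na * (m.factorial * ((Na-1).factorial * Na)) := by
          have h1 : 1 ≤ (Na-1).factorial * Na := Nat.le_mul_of_pos_right _ hNa |>.trans_eq' (by simp) |>.trans (Nat.mul_le_mul_right _ (Nat.one_le_iff_ne_zero.2 (Nat.factorial_ne_zero _)))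
          calc m.factorial * n ^ Na = n ^ Na * (m.factorial * 1) := by ring
            _ ≤ n ^ Na * (m.factorial * ((Na-1).factorial * Na)) :=
              Nat.mul_le_mul_left _ (Nat.mul_le_mul_left _ h1)
  have hden : (0:ℝ) < (m.factorial : ℝ) * ((Na-1).factorial : ℝ) * Na := by positivity
  have heq : ((n-j).factorial:ℝ) / ((m.factorial:ℝ) * ((Na-1).factorial:ℝ)) * (Na:ℝ)⁻¹
      = ((n-j).factorial:ℝ) / ((m.factorial:ℝ) * ((Na-1).factorial:ℝ) * Na) := by ring
  rw [heq, div_le_iff₀ hden]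
  calc ((n-j).factorial : ℝ) ≤ ((n ^ Na * (m.factorial * ((Na-1).factorial * Na)) : ℕ) : ℝ) := by
        exact_mod_cast hnat
    _ = (n:ℝ) ^ Na * ((m.factorial : ℝ) * ((Na-1).factorial : ℝ) * Na) := by push_cast; ring
end

section
/- Let n, N_a, N_b be positive integers with n₀ := n − N_a − N_b ≥ 1. Let B_1, …, B_{N_b} be independent random variables where, for each j ∈ {1, …, N_b}, B_j has the Beta(n − N_a − j + 1, N_a) distribution. Then for every real γ > 0, P(∏_{j=1}^{N_b} B_j ≤ γ) ≤ n^{N_a · N_b} · γ^{n₀}. -/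
open MeasureTheory ProbabilityTheory

lemma aux_factorial_le (n : ℕ) : ∀ (k b : ℕ), b + k ≤ n → (b + k).factorial ≤ b.factorial * n ^ k := by
  intro k
  induction k with
  | zero => intro b _; simp
  | succ k ih =>
    intro b h
    have h1 : b + (k+1) = (b + k) + 1 := by omega
    rw [h1, Nat.factorial_succ]
    calc (b + k + 1) * (b + k).factorial ≤ n * (b.factorial * n ^ k) :=
          Nat.mul_le_mul (by omega) (ih b (by omega))
      _ = b.factorial * n ^ (k+1) := by ring

lemma aux_lintegral_prod {Ω : Type*} [MeasurableSpace Ω] (μ : Measure Ω) [IsProbabilityMeasure μ]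
    {ι : Type*} (g : ι → Ω → ENNReal) (hg : ∀ i, Measurable (g i))
    (hindep : iIndepFun g μ) (s : Finset ι) :
    ∫⁻ ω, ∏ i ∈ s, g i ω ∂μ = ∏ i ∈ s, ∫⁻ ω, g i ω ∂μ := by
  classical
  induction s using Finset.induction_on with
  | empty => simp
  | @insert a s hi ih =>
    simp only [Finset.prod_insert hi]
    have hprod : Measurable (fun ω => ∏ i ∈ s, g i ω) := by
      apply Finset.measurable_prod; exact fun i _ => hg i
    have hind : IndepFun (g a) (fun ω => ∏ i ∈ s, g i ω) μ := by
      have := (hindep.indepFun_finsetProd_of_notMem hg (s := s) (i := a) hi).symm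
      convert this using 1
      ext ω
      simp [Finset.prod_apply]
    calc ∫⁻ ω, g a ω * ∏ i ∈ s, g i ω ∂μ
        = (∫⁻ ω, g a ω ∂μ) * ∫⁻ ω, ∏ i ∈ s, g i ω ∂μ :=
          lintegral_mul_eq_lintegral_mul_lintegral_of_indepFun'' (hg a).aemeasurable
            hprod.aemeasurable hind
      _ = (∫⁻ ω, g a ω ∂μ) * ∏ i ∈ s, ∫⁻ ω, g i ω ∂μ := by rw [ih]

lemma aux_gamma_nat (k : ℕ) (hk : 1 ≤ k) :
    Real.Gamma (k : ℝ) = ((k - 1).factorial : ℝ) := by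
  obtain ⟨l, rfl⟩ : ∃ l, k = l + 1 := ⟨k - 1, by omega⟩
  rw [show ((l + 1 : ℕ) : ℝ) = (l : ℝ) + 1 by push_cast; ring, Real.Gamma_nat_eq_factorial]
  simp

/-- `betaDensity` with natural parameters, in terms of factorials and natural powers. -/
lemma aux_betaDensity_nat (m b : ℕ) (hm : 1 ≤ m) (hb : 1 ≤ b) :
    betaDensity (m : ℝ) (b : ℝ) = fun s =>
      if 0 < s ∧ s < 1 then
        ((m + b - 1).factorial : ℝ) / ((m - 1).factorial * (b - 1).factorial)
          * s ^ (m - 1) * (1 - s) ^ (b - 1)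
      else 0 := by
  funext s
  unfold betaDensity
  split_ifs with h
  · have h1 : (m : ℝ) + (b : ℝ) = ((m + b : ℕ) : ℝ) := by push_cast; ring
    have h2 : (m : ℝ) - 1 = ((m - 1 : ℕ) : ℝ) := by
      rw [Nat.cast_sub hm]; norm_num
    have h3 : (b : ℝ) - 1 = ((b - 1 : ℕ) : ℝ) := by
      rw [Nat.cast_sub hb]; norm_num
    rw [h1, aux_gamma_nat (m + b) (by omega), aux_gamma_nat m hm, aux_gamma_nat b hb,
      h2, h3, Real.rpow_natCast, Real.rpow_natCast]
  · rfl

/-- Pointwise bound: density times `s⁻ⁿ⁰` is at most `n^Na` on `(0,1)`. -/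
lemma aux_pointwise (n Na n0 m : ℕ) (hNa : 1 ≤ Na) (hm : n0 + 1 ≤ m) (hmn : m + Na ≤ n + 1)
    (s : ℝ) :
    ENNReal.ofReal (betaDensity (m : ℝ) (Na : ℝ) s) * (ENNReal.ofReal s)⁻¹ ^ n0
      ≤ Set.indicator (Set.Ioo (0:ℝ) 1) (fun _ => (n : ENNReal) ^ Na) s := by
  rw [aux_betaDensity_nat m Na (by omega) hNa]
  by_cases hs : 0 < s ∧ s < 1
  · obtain ⟨hs0, hs1⟩ := hs
    set C : ℝ := ((m + Na - 1).factorial : ℝ) / ((m - 1).factorial * (Na - 1).factorial) with hC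
    have hC0 : 0 ≤ C := by positivity
    have hCle : C ≤ (n : ℝ) ^ Na := by
      rw [hC, div_le_iff₀ (by positivity)]
      have hnat : (m - 1 + Na).factorial ≤ (m - 1).factorial * n ^ Na :=
        aux_factorial_le n Na (m - 1) (by omega)
      have hcast : ((m + Na - 1).factorial : ℝ) ≤ ((m - 1).factorial : ℝ) * (n : ℝ) ^ Na := by
        rw [show m + Na - 1 = m - 1 + Na by omega]
        exact_mod_cast hnat
      have hfac1 : (1 : ℝ) ≤ ((Na - 1).factorial : ℝ) := by
        exact_mod_cast Nat.one_le_iff_ne_zero.mpr (Nat.factorial_pos _).ne'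
      nlinarith [hcast, hfac1, pow_nonneg (Nat.cast_nonneg n : (0:ℝ) ≤ (n:ℝ)) Na,
        (Nat.cast_nonneg ((m-1).factorial) : (0:ℝ) ≤ ((m-1).factorial : ℝ))]
    have hreal : (if 0 < s ∧ s < 1 then C * s ^ (m - 1) * (1 - s) ^ (Na - 1) else 0)
        * s⁻¹ ^ n0 ≤ (n : ℝ) ^ Na := by
      rw [if_pos ⟨hs0, hs1⟩]
      have hsplit : s ^ (m - 1) = s ^ n0 * s ^ (m - 1 - n0) := by
        rw [← pow_add]; congr 1; omega
      have hinv : s⁻¹ ^ n0 * s ^ n0 = 1 := by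
        rw [← mul_pow, inv_mul_cancel₀ (ne_of_gt hs0), one_pow]
      calc C * s ^ (m - 1) * (1 - s) ^ (Na - 1) * s⁻¹ ^ n0
          = C * (s⁻¹ ^ n0 * s ^ n0) * s ^ (m - 1 - n0) * (1 - s) ^ (Na - 1) := by
            rw [hsplit]; ring
        _ = C * s ^ (m - 1 - n0) * (1 - s) ^ (Na - 1) := by rw [hinv]; ring
        _ ≤ C * 1 * 1 := by
            apply mul_le_mul
            · apply mul_le_mul_of_nonneg_left _ hC0
              exact pow_le_one₀ hs0.le hs1.le
            · exact pow_le_one₀ (by linarith) (by linarith)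
            · exact pow_nonneg (by linarith) _
            · simpa using hC0
        _ = C := by ring
        _ ≤ (n : ℝ) ^ Na := hCle
    have hφ : (ENNReal.ofReal s)⁻¹ ^ n0 = ENNReal.ofReal (s⁻¹ ^ n0) := by
      rw [← ENNReal.ofReal_inv_of_pos hs0, ← ENNReal.ofReal_pow (by positivity)]
    have hne : (0:ℝ) ≤ (if 0 < s ∧ s < 1 then C * s ^ (m - 1) * (1 - s) ^ (Na - 1) else 0) := by
      rw [if_pos ⟨hs0, hs1⟩]
      exact mul_nonneg (mul_nonneg hC0 (pow_nonneg hs0.le _)) (pow_nonneg (by linarith) _)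
    rw [hφ, ← ENNReal.ofReal_mul hne,
      Set.indicator_of_mem (Set.mem_Ioo.mpr ⟨hs0, hs1⟩)]
    calc ENNReal.ofReal _ ≤ ENNReal.ofReal ((n : ℝ) ^ Na) := ENNReal.ofReal_le_ofReal hreal
      _ = (n : ENNReal) ^ Na := by
        rw [ENNReal.ofReal_pow (Nat.cast_nonneg n), ENNReal.ofReal_natCast]
  · simp only [if_neg hs, ENNReal.ofReal_zero, zero_mul]
    exact zero_le


/-- **Tail bound for the product of independent Beta random variables**
(Eq. (142) of the paper).  Let `n₀ := n − N_a − N_b ≥ 1` and let `B_1, …, B_{N_b}` be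
independent with `B_j ∼ Beta(n − N_a − j + 1, N_a)`.  Then for every `γ > 0`,
`P(∏_j B_j ≤ γ) ≤ n^{N_a N_b} γ^{n₀}`. -/
theorem prod_beta_tail_bound
    {Ω : Type*} [MeasurableSpace Ω] (μ : Measure Ω) [IsProbabilityMeasure μ]
    (n Na Nb : ℕ) (hNa : 0 < Na) (hNb : 0 < Nb) (hn0 : 1 ≤ n - Na - Nb)
    (B : Fin Nb → Ω → ℝ) (hB : ∀ j, Measurable (B j))
    (hindep : iIndepFun B μ)
    (hlaw : ∀ j : Fin Nb, Measure.map (B j) μ =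
      volume.withDensity
        (fun s =>
          ENNReal.ofReal (betaDensity ((n : ℝ) - Na - ((j : ℕ) + 1) + 1) Na s)))
    (γ : ℝ) (hγ : 0 < γ) :
    (μ {ω | ∏ j : Fin Nb, B j ω ≤ γ}).toReal ≤
      (n : ℝ) ^ (Na * Nb) * γ ^ (n - Na - Nb) := by
  set n0 := n - Na - Nb with hn0def
  have hN : Na + Nb + 1 ≤ n := by omega
  set φ : ℝ → ENNReal := fun s => (ENNReal.ofReal s)⁻¹ ^ n0 with hφdef
  have hφm : Measurable φ := (ENNReal.measurable_ofReal.inv).pow_const n0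
  set g : Fin Nb → Ω → ENNReal := fun j ω => φ (B j ω) with hgdef
  have hgm : ∀ j, Measurable (g j) := fun j => hφm.comp (hB j)
  have hgindep : iIndepFun g μ :=
    hindep.comp (fun _ => φ) (fun _ => hφm)
  have hmcast : ∀ j : Fin Nb, ((n : ℝ) - Na - ((j : ℕ) + 1) + 1) = ((n - Na - (j:ℕ) : ℕ) : ℝ) := by
    intro j
    have hj : (j:ℕ) < Nb := j.isLt
    have h : (n - Na - (j:ℕ) : ℕ) + (Na + (j:ℕ)) = n := by omega
    have h2 := congrArg (fun k : ℕ => (k : ℝ)) h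
    push_cast at h2
    linarith
  -- moment bound for each factor
  have hmom : ∀ j : Fin Nb, ∫⁻ ω, g j ω ∂μ ≤ (n : ENNReal) ^ Na := by
    intro j
    have hj : (j:ℕ) < Nb := j.isLt
    set m := n - Na - (j:ℕ) with hmdef
    have h1 : ∫⁻ ω, g j ω ∂μ = ∫⁻ s, φ s ∂(Measure.map (B j) μ) :=
      (lintegral_map hφm (hB j)).symm
    rw [h1, hlaw j, hmcast j]
    have hd : Measurable (fun s => ENNReal.ofReal (betaDensity ((m:ℕ):ℝ) (Na:ℝ) s)) := by
      rw [aux_betaDensity_nat m Na (by omega) hNa]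
      apply ENNReal.measurable_ofReal.comp
      refine Measurable.ite ?_ ?_ measurable_const
      · exact (measurableSet_Ioo (a := (0:ℝ)) (b := 1))
      · exact ((measurable_const.mul (measurable_id.pow_const _)).mul
          ((measurable_const.sub measurable_id).pow_const _))
    rw [lintegral_withDensity_eq_lintegral_mul volume hd hφm]
    calc ∫⁻ s, ((fun s => ENNReal.ofReal (betaDensity ((m:ℕ):ℝ) (Na:ℝ) s)) * φ) s ∂volume
        ≤ ∫⁻ s, Set.indicator (Set.Ioo (0:ℝ) 1) (fun _ => (n : ENNReal) ^ Na) s ∂volume := by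
          apply lintegral_mono
          intro s
          exact aux_pointwise n Na n0 m hNa (by omega) (by omega) s
      _ = (n : ENNReal) ^ Na := by
          rw [lintegral_indicator measurableSet_Ioo, setLIntegral_const, Real.volume_Ioo]
          norm_num
  -- the exceptional null set
  have hnull : ∀ j : Fin Nb, μ {ω | B j ω ∉ Set.Ioo (0:ℝ) 1} = 0 := by
    intro j
    have heq : {ω | B j ω ∉ Set.Ioo (0:ℝ) 1} = B j ⁻¹' (Set.Ioo (0:ℝ) 1)ᶜ := rfl
    rw [heq, ← Measure.map_apply (hB j) measurableSet_Ioo.compl, hlaw j,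
      withDensity_apply _ measurableSet_Ioo.compl]
    have hz : ∀ s ∈ (Set.Ioo (0:ℝ) 1)ᶜ,
        ENNReal.ofReal (betaDensity ((n : ℝ) - Na - ((j : ℕ) + 1) + 1) Na s) = 0 := by
      intro s hs
      have : ¬(0 < s ∧ s < 1) := by simpa [Set.mem_Ioo] using hs
      simp [betaDensity, this]
    rw [setLIntegral_congr_fun measurableSet_Ioo.compl hz]
    simp
  set c := ENNReal.ofReal (γ⁻¹ ^ n0) with hcdef
  have hc0 : c ≠ 0 := by
    rw [hcdef, Ne, ENNReal.ofReal_eq_zero, not_le]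
    positivity
  have hcT : c ≠ ⊤ := ENNReal.ofReal_ne_top
  have hsub : {ω | ∏ j : Fin Nb, B j ω ≤ γ} ⊆
      {ω | c ≤ ∏ j : Fin Nb, g j ω} ∪ ⋃ j, {ω | B j ω ∉ Set.Ioo (0:ℝ) 1} := by
    intro ω hω
    by_cases hG : ∀ j : Fin Nb, B j ω ∈ Set.Ioo (0:ℝ) 1
    · left
      have hpos : ∀ j, 0 < B j ω := fun j => (hG j).1
      have hP : 0 < ∏ j, B j ω := Finset.prod_pos (fun j _ => hpos j)
      have h1 : γ⁻¹ ≤ (∏ j, B j ω)⁻¹ := inv_anti₀ hP hω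
      have h2 : γ⁻¹ ^ n0 ≤ ((∏ j, B j ω)⁻¹) ^ n0 := pow_le_pow_left₀ (by positivity) h1 n0
      have h3 : ((∏ j, B j ω)⁻¹) ^ n0 = ∏ j, (B j ω)⁻¹ ^ n0 := by
        rw [← Finset.prod_inv_distrib, ← Finset.prod_pow]
      have h4 : (∏ j, g j ω) = ENNReal.ofReal (∏ j, (B j ω)⁻¹ ^ n0) := by
        rw [ENNReal.ofReal_prod_of_nonneg (fun j _ => pow_nonneg (inv_nonneg.mpr (hpos j).le) _)]
        refine Finset.prod_congr rfl (fun j _ => ?_)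
        show (ENNReal.ofReal (B j ω))⁻¹ ^ n0 = _
        rw [← ENNReal.ofReal_inv_of_pos (hpos j),
          ← ENNReal.ofReal_pow (inv_nonneg.mpr (hpos j).le)]
      show c ≤ _
      rw [h4, hcdef]
      exact ENNReal.ofReal_le_ofReal (h2.trans_eq h3)
    · right
      push_neg at hG
      obtain ⟨j, hj⟩ := hG
      exact Set.mem_iUnion.mpr ⟨j, hj⟩
  have hmarkov : μ {ω | c ≤ ∏ j : Fin Nb, g j ω} ≤ (∫⁻ ω, ∏ j : Fin Nb, g j ω ∂μ) / c :=
    meas_ge_le_lintegral_div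
      ((Finset.measurable_prod _ (fun j _ => hgm j)).aemeasurable) hc0 hcT
  have hint : ∫⁻ ω, ∏ j : Fin Nb, g j ω ∂μ ≤ (n : ENNReal) ^ (Na * Nb) := by
    rw [aux_lintegral_prod μ g hgm hgindep]
    calc ∏ j : Fin Nb, ∫⁻ ω, g j ω ∂μ ≤ ∏ _j : Fin Nb, (n : ENNReal) ^ Na :=
          Finset.prod_le_prod' (fun j _ => hmom j)
      _ = (n : ENNReal) ^ (Na * Nb) := by
          rw [Finset.prod_const, Finset.card_univ, Fintype.card_fin, ← pow_mul]
  have hchain : μ {ω | ∏ j : Fin Nb, B j ω ≤ γ} ≤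
      (n : ENNReal) ^ (Na * Nb) * ENNReal.ofReal (γ ^ n0) := by
    calc μ {ω | ∏ j : Fin Nb, B j ω ≤ γ}
        ≤ μ ({ω | c ≤ ∏ j : Fin Nb, g j ω} ∪ ⋃ j, {ω | B j ω ∉ Set.Ioo (0:ℝ) 1}) :=
          measure_mono hsub
      _ ≤ μ {ω | c ≤ ∏ j : Fin Nb, g j ω} + μ (⋃ j, {ω | B j ω ∉ Set.Ioo (0:ℝ) 1}) :=
          measure_union_le _ _
      _ = μ {ω | c ≤ ∏ j : Fin Nb, g j ω} := by
          rw [measure_iUnion_null (fun j => hnull j), add_zero]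
      _ ≤ (∫⁻ ω, ∏ j : Fin Nb, g j ω ∂μ) / c := hmarkov
      _ ≤ (n : ENNReal) ^ (Na * Nb) / c := by gcongr
      _ = (n : ENNReal) ^ (Na * Nb) * ENNReal.ofReal (γ ^ n0) := by
          rw [ENNReal.div_eq_inv_mul, mul_comm]
          congr 1
          rw [hcdef, ← ENNReal.ofReal_inv_of_pos (by positivity)]
          congr 1
          rw [inv_pow, inv_inv]
  have hfin : (n : ENNReal) ^ (Na * Nb) * ENNReal.ofReal (γ ^ n0) ≠ ⊤ :=
    ENNReal.mul_ne_top (ENNReal.pow_ne_top (ENNReal.natCast_ne_top n)) ENNReal.ofReal_ne_top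
  calc (μ {ω | ∏ j : Fin Nb, B j ω ≤ γ}).toReal
      ≤ ((n : ENNReal) ^ (Na * Nb) * ENNReal.ofReal (γ ^ n0)).toReal :=
        ENNReal.toReal_mono hfin hchain
    _ = (n : ℝ) ^ (Na * Nb) * γ ^ n0 := by
        rw [ENNReal.toReal_mul, ENNReal.toReal_pow, ENNReal.toReal_ofReal (by positivity)]
        norm_num
end

section
/- Let Z = X + iY be a standard circularly-symmetric complex Gaussian random variable, i.e., X and Y are independent real Gaussian random variables each with mean 0 and variance 1/2. For a real number c, define the real random variable D_c := 1 − |√c · Z − 1|² / (1 + c). Then for every c with 0 < c ≤ 1, E[D_c⁴] ≤ 200 · c². -/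
open MeasureTheory ProbabilityTheory Complex Real
open scoped ENNReal NNReal

lemma intA (n : ℕ) : Integrable (fun x : ℝ => x ^ n * Real.exp (-x^2)) := by
  have hg : Integrable (fun x : ℝ =>
      Real.exp (-1 * x^2) + (2^n * (n.factorial : ℝ)) * Real.exp (-(1/2) * x^2)) :=
    (integrable_exp_neg_mul_sq one_pos).add
      ((integrable_exp_neg_mul_sq (by norm_num : (0:ℝ) < 1/2)).const_mul _)
  refine hg.mono' (((measurable_id.pow_const n).mul (by fun_prop)).aestronglyMeasurable) (Filter.Eventually.of_forall fun x => ?_)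
  have h1 : |x| ^ n ≤ 1 + 2^n * (n.factorial : ℝ) * Real.exp (x^2/2) := by
    rcases le_total (|x|) 1 with h | h
    · have h1 : |x| ^ n ≤ 1 := pow_le_one₀ (abs_nonneg x) h
      have h2 : (0:ℝ) ≤ 2^n * (n.factorial : ℝ) * Real.exp (x^2/2) := by positivity
      linarith
    · have h2 : |x| ^ n ≤ |x| ^ (2*n) :=
        pow_le_pow_right₀ h (by omega)
      have h3 : |x| ^ (2*n) = (x^2)^n := by
        rw [pow_mul, _root_.sq_abs]
      have h4 : (x^2/2)^n / (n.factorial : ℝ) ≤ Real.exp (x^2/2) :=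
        Real.pow_div_factorial_le_exp (x := x^2/2) (by positivity) n
      have h5 : (x^2)^n ≤ 2^n * (n.factorial : ℝ) * Real.exp (x^2/2) := by
        have hfac : (0:ℝ) < (n.factorial : ℝ) := by positivity
        rw [div_le_iff₀ hfac] at h4
        have : (x^2)^n = 2^n * (x^2/2)^n := by
          rw [← mul_pow]; ring_nf
        rw [this]
        calc 2^n * (x^2/2)^n ≤ 2^n * (Real.exp (x^2/2) * (n.factorial : ℝ)) := by
              gcongr
          _ = 2^n * (n.factorial : ℝ) * Real.exp (x^2/2) := by ring
      linarith
  have hxe : Real.exp (x^2/2) * Real.exp (-x^2) = Real.exp (-(1/2) * x^2) := by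
    rw [← Real.exp_add]; ring_nf
  have hepos : (0:ℝ) < Real.exp (-x^2) := Real.exp_pos _
  calc ‖x ^ n * Real.exp (-x^2)‖ = |x|^n * Real.exp (-x^2) := by
        rw [norm_mul, Real.norm_eq_abs, Real.norm_eq_abs, _root_.abs_pow,
          abs_of_pos hepos]
    _ ≤ (1 + 2^n * (n.factorial : ℝ) * Real.exp (x^2/2)) * Real.exp (-x^2) := by gcongr
    _ = Real.exp (-x^2) + (2^n * (n.factorial : ℝ)) * (Real.exp (x^2/2) * Real.exp (-x^2)) := by ring
    _ = Real.exp (-1 * x^2) + (2^n * (n.factorial : ℝ)) * Real.exp (-(1/2) * x^2) := by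
        rw [hxe, neg_one_mul]

lemma J0 : ∫ x : ℝ, x ^ 0 * Real.exp (-x^2) = Real.sqrt π := by
  have := integral_gaussian 1
  simp only [neg_mul, one_mul, div_one] at this
  simpa using this

lemma Jrec (n : ℕ) : ∫ x : ℝ, x ^ (n+2) * Real.exp (-x^2)
    = ((n+1 : ℝ)/2) * ∫ x : ℝ, x ^ n * Real.exp (-x^2) := by
  have hu : ∀ x : ℝ, HasDerivAt (fun x : ℝ => x ^ (n+1)) (((n:ℝ)+1) * x ^ n) x := by
    intro x
    have := hasDerivAt_pow (n+1) x
    simpa [Nat.cast_add] using this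
  have hv : ∀ x : ℝ, HasDerivAt (fun x : ℝ => -(1/2) * Real.exp (-x^2))
      (x * Real.exp (-x^2)) x := by
    intro x
    have h2 : HasDerivAt (fun x : ℝ => -x^2) (-(2*x)) x := by
      simpa using (hasDerivAt_pow 2 x).fun_neg
    have h3 : HasDerivAt (fun x : ℝ => Real.exp (-x^2))
        (Real.exp (-x^2) * -(2*x)) x := h2.exp
    have := h3.const_mul (-(1/2) : ℝ)
    exact this.congr_deriv (by ring)
  have huv' : Integrable ((fun x : ℝ => x ^ (n+1)) * fun x => x * Real.exp (-x^2)) := by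
    refine (intA (n+2)).congr (Filter.Eventually.of_forall fun x => ?_)
    simp only [Pi.mul_apply]; ring
  have hu'v : Integrable ((fun x : ℝ => ((n:ℝ)+1) * x ^ n)
      * fun x => -(1/2) * Real.exp (-x^2)) := by
    refine (((intA n).const_mul (((n:ℝ)+1) * (-(1/2)))).congr
      (Filter.Eventually.of_forall fun x => ?_))
    simp only [Pi.mul_apply]; ring
  have huv : Integrable ((fun x : ℝ => x ^ (n+1)) * fun x => -(1/2) * Real.exp (-x^2)) := by
    refine (((intA (n+1)).const_mul (-(1/2))).congr
      (Filter.Eventually.of_forall fun x => ?_))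
    simp only [Pi.mul_apply]; ring
  have key := integral_mul_deriv_eq_deriv_mul_of_integrable (fun x _ => hu x) (fun x _ => hv x) huv' hu'v huv
  calc ∫ x : ℝ, x ^ (n+2) * Real.exp (-x^2)
      = ∫ x : ℝ, (x:ℝ) ^ (n+1) * (x * Real.exp (-x^2)) := by
        congr 1; funext x; ring
    _ = - ∫ x : ℝ, ((n:ℝ)+1) * x ^ n * (-(1/2) * Real.exp (-x^2)) := key
    _ = ((n+1 : ℝ)/2) * ∫ x : ℝ, x ^ n * Real.exp (-x^2) := by
        rw [← integral_neg, ← integral_const_mul]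
        congr 1; funext x; ring

lemma Jval : (∫ x : ℝ, x ^ 2 * Real.exp (-x^2) = (1/2) * Real.sqrt π)
    ∧ (∫ x : ℝ, x ^ 4 * Real.exp (-x^2) = (3/4) * Real.sqrt π)
    ∧ (∫ x : ℝ, x ^ 6 * Real.exp (-x^2) = (15/8) * Real.sqrt π)
    ∧ (∫ x : ℝ, x ^ 8 * Real.exp (-x^2) = (105/16) * Real.sqrt π) := by
  have h2 := Jrec 0
  have h4 := Jrec 2
  have h6 := Jrec 4
  have h8 := Jrec 6
  rw [J0] at h2
  norm_num at h2 h4 h6 h8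
  refine ⟨h2, ?_, ?_, ?_⟩
  · rw [h4, h2]; ring
  · rw [h6, h4, h2]; ring
  · rw [h8, h6, h4, h2]; ring

lemma pdf_eq (x : ℝ) : gaussianPDFReal 0 (1/2) x = (Real.sqrt π)⁻¹ * Real.exp (-x^2) := by
  rw [gaussianPDFReal]
  push_cast
  norm_num
  have h2 : Real.sqrt 2 ≠ 0 := by positivity
  have hπ : Real.sqrt π ≠ 0 := by positivity
  ring_nf
  field_simp

lemma gauss_eq_wd : gaussianReal 0 (1/2) =
    (volume : Measure ℝ).withDensity
      (fun x => ((gaussianPDFReal 0 (1/2) x).toNNReal : ℝ≥0∞)) := by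
  rw [gaussianReal_of_var_ne_zero 0 (by norm_num : (1/2 : NNReal) ≠ 0)]
  rfl

lemma gauss_integral (g : ℝ → ℝ) :
    ∫ x, g x ∂(gaussianReal 0 (1/2))
      = ∫ x, gaussianPDFReal 0 (1/2) x * g x := by
  rw [gauss_eq_wd, integral_withDensity_eq_integral_smul
    ((measurable_gaussianPDFReal 0 (1/2)).real_toNNReal) g]
  congr 1; funext x
  rw [NNReal.smul_def, Real.coe_toNNReal _ (gaussianPDFReal_nonneg 0 (1/2) x), smul_eq_mul]

lemma gauss_integrable (g : ℝ → ℝ) (hg : AEStronglyMeasurable g (gaussianReal 0 (1/2))) :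
    Integrable g (gaussianReal 0 (1/2)) ↔
      Integrable (fun x => g x * gaussianPDFReal 0 (1/2) x) volume := by
  rw [gauss_eq_wd]
  rw [integrable_withDensity_iff ((measurable_gaussianPDFReal 0 (1/2)).real_toNNReal.coe_nnreal_ennreal) (by
    exact Filter.Eventually.of_forall fun x => ENNReal.coe_lt_top)]
  simp only [ENNReal.coe_toReal, Real.coe_toNNReal _ (gaussianPDFReal_nonneg 0 (1/2) _)]

lemma poly_integrable (a b cc d e : ℝ) :
    Integrable (fun x : ℝ => a*x^8 + b*x^6 + cc*x^4 + d*x^2 + e) (gaussianReal 0 (1/2)) := by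
  rw [gauss_integrable _ (by fun_prop : Measurable (fun x : ℝ => a*x^8 + b*x^6 + cc*x^4 + d*x^2 + e)).aestronglyMeasurable]
  have : Integrable (fun x : ℝ => (Real.sqrt π)⁻¹ *
      (a * (x^8 * Real.exp (-x^2)) + b * (x^6 * Real.exp (-x^2)) + cc * (x^4 * Real.exp (-x^2))
        + d * (x^2 * Real.exp (-x^2)) + e * (x^0 * Real.exp (-x^2)))) :=
    (((((intA 8).const_mul a).add ((intA 6).const_mul b)).add ((intA 4).const_mul cc)).add
      ((intA 2).const_mul d)).add ((intA 0).const_mul e) |>.const_mul _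
  refine this.congr (Filter.Eventually.of_forall fun x => ?_)
  simp only [pdf_eq]; ring

lemma poly_integral (a b cc d e : ℝ) :
    ∫ x, (a*x^8 + b*x^6 + cc*x^4 + d*x^2 + e) ∂(gaussianReal 0 (1/2))
      = a*(105/16) + b*(15/8) + cc*(3/4) + d*(1/2) + e := by
  rw [gauss_integral]
  have heq : ∀ x : ℝ, gaussianPDFReal 0 (1/2) x * (a*x^8 + b*x^6 + cc*x^4 + d*x^2 + e)
      = (Real.sqrt π)⁻¹ * ((a * (x^8 * Real.exp (-x^2)) + b * (x^6 * Real.exp (-x^2))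
        + cc * (x^4 * Real.exp (-x^2)) + d * (x^2 * Real.exp (-x^2))
        + e * (x^0 * Real.exp (-x^2)))) := by
    intro x; rw [pdf_eq]; ring
  rw [show (fun x => gaussianPDFReal 0 (1/2) x * (a*x^8 + b*x^6 + cc*x^4 + d*x^2 + e))
      = fun x => (Real.sqrt π)⁻¹ * ((a * (x^8 * Real.exp (-x^2)) + b * (x^6 * Real.exp (-x^2))
        + cc * (x^4 * Real.exp (-x^2)) + d * (x^2 * Real.exp (-x^2))
        + e * (x^0 * Real.exp (-x^2)))) from funext heq]
  rw [integral_const_mul]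
  rw [integral_add, integral_add, integral_add, integral_add]
  · rw [integral_const_mul, integral_const_mul, integral_const_mul, integral_const_mul,
      integral_const_mul, Jval.1, Jval.2.1, Jval.2.2.1, Jval.2.2.2, J0]
    have hpi : Real.sqrt π ≠ 0 := by positivity
    field_simp
  all_goals (
    first
    | exact ((intA 8).const_mul a)
    | exact (((intA 8).const_mul a).add ((intA 6).const_mul b))
    | exact ((((intA 8).const_mul a).add ((intA 6).const_mul b)).add ((intA 4).const_mul cc))
    | exact (((((intA 8).const_mul a).add ((intA 6).const_mul b)).add
        ((intA 4).const_mul cc)).add ((intA 2).const_mul d))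
    | exact ((intA 6).const_mul b)
    | exact ((intA 4).const_mul cc)
    | exact ((intA 2).const_mul d)
    | exact ((intA 0).const_mul e))

lemma four_pow_add_le (a b : ℝ) : (a+b)^4 ≤ 8*a^4 + 8*b^4 := by
  nlinarith [sq_nonneg (a-b), sq_nonneg (a+b), sq_nonneg (a^2-b^2), sq_nonneg (a^2+b^2),
    sq_nonneg (a*b), sq_nonneg a, sq_nonneg b]

/-- **Fourth-moment bound for the normalized information-density summand**
(cf. Appendix H-1 of the paper).  If `Z = X + iY` is a standard circularly-symmetric
complex Gaussian (i.e. `X, Y` are independent real Gaussians of mean `0` and variance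
`1/2`) and, for `0 < c ≤ 1`, `D_c := 1 − |√c·Z − 1|²/(1+c)`, then `E[D_c⁴] ≤ 200·c²`. -/
theorem fourth_moment_of_info_density_summand_le
    {Ω : Type*} [MeasurableSpace Ω] (μ : Measure Ω) [IsProbabilityMeasure μ]
    (X Y : Ω → ℝ) (hX : Measurable X) (hY : Measurable Y)
    (hXY : IndepFun X Y μ)
    (hlawX : Measure.map X μ = gaussianReal 0 (1 / 2))
    (hlawY : Measure.map Y μ = gaussianReal 0 (1 / 2))
    (c : ℝ) (hc : 0 < c) (hc1 : c ≤ 1)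
    (Z : Ω → ℂ) (hZ : ∀ ω, Z ω = (X ω : ℂ) + (Y ω : ℂ) * Complex.I)
    (D : Ω → ℝ)
    (hD : ∀ ω, D ω = 1 - ‖(Real.sqrt c : ℂ) * Z ω - 1‖ ^ 2 / (1 + c)) :
    ∫ ω, D ω ^ 4 ∂μ ≤ 200 * c ^ 2 := by
  have hs2 : (Real.sqrt c) ^ 2 = c := Real.sq_sqrt hc.le
  -- transfer lemma
  have transfer : ∀ (W : Ω → ℝ), Measurable W → Measure.map W μ = gaussianReal 0 (1/2) →
      ∀ (a b cc d e : ℝ),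
      Integrable (fun ω => a*(W ω)^8 + b*(W ω)^6 + cc*(W ω)^4 + d*(W ω)^2 + e) μ ∧
      ∫ ω, (a*(W ω)^8 + b*(W ω)^6 + cc*(W ω)^4 + d*(W ω)^2 + e) ∂μ
        = a*(105/16) + b*(15/8) + cc*(3/4) + d*(1/2) + e := by
    intro W hW hlaw a b cc d e
    have hmeas : Measurable (fun x : ℝ => a*x^8 + b*x^6 + cc*x^4 + d*x^2 + e) := by fun_prop
    constructor
    · have h1 := poly_integrable a b cc d e
      rw [← hlaw] at h1
      exact (integrable_map_measure hmeas.aestronglyMeasurable hW.aemeasurable).mp h1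
    · have h2 := poly_integral a b cc d e
      rw [← hlaw, integral_map hW.aemeasurable hmeas.aestronglyMeasurable] at h2
      exact h2
  -- one-variable moment facts
  have hU4 := transfer X hX hlawX 1 (-2) (3/2) (-1/2) (1/16)
  have hU3 := transfer X hX hlawX 0 (-1) (3/2) (-3/4) (1/8)
  have hU2 := transfer X hX hlawX 0 0 1 (-1) (1/4)
  have hU1 := transfer X hX hlawX 0 0 0 (-1) (1/2)
  have hX4 := transfer X hX hlawX 0 0 1 0 0
  have hV4 := transfer Y hY hlawY 1 (-2) (3/2) (-1/2) (1/16)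
  have hV3 := transfer Y hY hlawY 0 (-1) (3/2) (-3/4) (1/8)
  have hV2 := transfer Y hY hlawY 0 0 1 (-1) (1/4)
  have hV1 := transfer Y hY hlawY 0 0 0 (-1) (1/2)
  -- rewrite to powers of (1/2 - W^2)
  have eU4 : (fun ω => (1/2 - X ω^2)^4)
      = fun ω => 1*(X ω)^8 + (-2)*(X ω)^6 + (3/2)*(X ω)^4 + (-1/2)*(X ω)^2 + 1/16 :=
    funext fun ω => by ring
  have eU3 : (fun ω => (1/2 - X ω^2)^3)
      = fun ω => 0*(X ω)^8 + (-1)*(X ω)^6 + (3/2)*(X ω)^4 + (-3/4)*(X ω)^2 + 1/8 :=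
    funext fun ω => by ring
  have eU2 : (fun ω => (1/2 - X ω^2)^2)
      = fun ω => 0*(X ω)^8 + 0*(X ω)^6 + 1*(X ω)^4 + (-1)*(X ω)^2 + 1/4 :=
    funext fun ω => by ring
  have eU1 : (fun ω => (1/2 - X ω^2))
      = fun ω => 0*(X ω)^8 + 0*(X ω)^6 + 0*(X ω)^4 + (-1)*(X ω)^2 + 1/2 :=
    funext fun ω => by ring
  have eX4 : (fun ω => (X ω)^4)
      = fun ω => 0*(X ω)^8 + 0*(X ω)^6 + 1*(X ω)^4 + 0*(X ω)^2 + 0 :=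
    funext fun ω => by ring
  have eV4 : (fun ω => (1/2 - Y ω^2)^4)
      = fun ω => 1*(Y ω)^8 + (-2)*(Y ω)^6 + (3/2)*(Y ω)^4 + (-1/2)*(Y ω)^2 + 1/16 :=
    funext fun ω => by ring
  have eV3 : (fun ω => (1/2 - Y ω^2)^3)
      = fun ω => 0*(Y ω)^8 + (-1)*(Y ω)^6 + (3/2)*(Y ω)^4 + (-3/4)*(Y ω)^2 + 1/8 :=
    funext fun ω => by ring
  have eV2 : (fun ω => (1/2 - Y ω^2)^2)
      = fun ω => 0*(Y ω)^8 + 0*(Y ω)^6 + 1*(Y ω)^4 + (-1)*(Y ω)^2 + 1/4 :=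
    funext fun ω => by ring
  have eV1 : (fun ω => (1/2 - Y ω^2))
      = fun ω => 0*(Y ω)^8 + 0*(Y ω)^6 + 0*(Y ω)^4 + (-1)*(Y ω)^2 + 1/2 :=
    funext fun ω => by ring
  have iU4 : Integrable (fun ω => (1/2 - X ω^2)^4) μ := by rw [eU4]; exact hU4.1
  have vU4 : ∫ ω, (1/2 - X ω^2)^4 ∂μ = 15/4 := by rw [eU4, hU4.2]; norm_num
  have iU3 : Integrable (fun ω => (1/2 - X ω^2)^3) μ := by rw [eU3]; exact hU3.1
  have vU3 : ∫ ω, (1/2 - X ω^2)^3 ∂μ = -1 := by rw [eU3, hU3.2]; norm_num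
  have iU2 : Integrable (fun ω => (1/2 - X ω^2)^2) μ := by rw [eU2]; exact hU2.1
  have vU2 : ∫ ω, (1/2 - X ω^2)^2 ∂μ = 1/2 := by rw [eU2, hU2.2]; norm_num
  have iU1 : Integrable (fun ω => (1/2 - X ω^2)) μ := by rw [eU1]; exact hU1.1
  have vU1 : ∫ ω, (1/2 - X ω^2) ∂μ = 0 := by rw [eU1, hU1.2]; norm_num
  have iX4 : Integrable (fun ω => (X ω)^4) μ := by rw [eX4]; exact hX4.1
  have vX4 : ∫ ω, (X ω)^4 ∂μ = 3/4 := by rw [eX4, hX4.2]; norm_num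
  have iV4 : Integrable (fun ω => (1/2 - Y ω^2)^4) μ := by rw [eV4]; exact hV4.1
  have vV4 : ∫ ω, (1/2 - Y ω^2)^4 ∂μ = 15/4 := by rw [eV4, hV4.2]; norm_num
  have iV3 : Integrable (fun ω => (1/2 - Y ω^2)^3) μ := by rw [eV3]; exact hV3.1
  have vV3 : ∫ ω, (1/2 - Y ω^2)^3 ∂μ = -1 := by rw [eV3, hV3.2]; norm_num
  have iV2 : Integrable (fun ω => (1/2 - Y ω^2)^2) μ := by rw [eV2]; exact hV2.1
  have vV2 : ∫ ω, (1/2 - Y ω^2)^2 ∂μ = 1/2 := by rw [eV2, hV2.2]; norm_num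
  have iV1 : Integrable (fun ω => (1/2 - Y ω^2)) μ := by rw [eV1]; exact hV1.1
  have vV1 : ∫ ω, (1/2 - Y ω^2) ∂μ = 0 := by rw [eV1, hV1.2]; norm_num
  -- independence of powers
  have ind31 : IndepFun (fun ω => (1/2 - X ω^2)^3) (fun ω => (1/2 - Y ω^2)) μ :=
    hXY.comp (φ := fun x : ℝ => (1/2 - x^2)^3) (ψ := fun x : ℝ => (1/2 - x^2))
      (by fun_prop) (by fun_prop)
  have ind22 : IndepFun (fun ω => (1/2 - X ω^2)^2) (fun ω => (1/2 - Y ω^2)^2) μ :=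
    hXY.comp (φ := fun x : ℝ => (1/2 - x^2)^2) (ψ := fun x : ℝ => (1/2 - x^2)^2)
      (by fun_prop) (by fun_prop)
  have ind13 : IndepFun (fun ω => (1/2 - X ω^2)) (fun ω => (1/2 - Y ω^2)^3) μ :=
    hXY.comp (φ := fun x : ℝ => (1/2 - x^2)) (ψ := fun x : ℝ => (1/2 - x^2)^3)
      (by fun_prop) (by fun_prop)
  -- products
  have iT2 : Integrable (fun ω => (1/2 - X ω^2)^3 * (1/2 - Y ω^2)) μ :=
    ind31.integrable_mul iU3 iV1
  have vT2 : ∫ ω, (1/2 - X ω^2)^3 * (1/2 - Y ω^2) ∂μ = 0 := by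
    have h : ∫ ω, (1/2 - X ω^2)^3 * (1/2 - Y ω^2) ∂μ
        = (∫ ω, (1/2 - X ω^2)^3 ∂μ) * ∫ ω, (1/2 - Y ω^2) ∂μ :=
      ind31.integral_fun_mul_eq_mul_integral iU3.aestronglyMeasurable iV1.aestronglyMeasurable
    rw [h, vU3, vV1]; ring
  have iT3 : Integrable (fun ω => (1/2 - X ω^2)^2 * (1/2 - Y ω^2)^2) μ :=
    ind22.integrable_mul iU2 iV2
  have vT3 : ∫ ω, (1/2 - X ω^2)^2 * (1/2 - Y ω^2)^2 ∂μ = 1/4 := by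
    have h : ∫ ω, (1/2 - X ω^2)^2 * (1/2 - Y ω^2)^2 ∂μ
        = (∫ ω, (1/2 - X ω^2)^2 ∂μ) * ∫ ω, (1/2 - Y ω^2)^2 ∂μ :=
      ind22.integral_fun_mul_eq_mul_integral iU2.aestronglyMeasurable iV2.aestronglyMeasurable
    rw [h, vU2, vV2]; ring
  have iT4 : Integrable (fun ω => (1/2 - X ω^2) * (1/2 - Y ω^2)^3) μ :=
    ind13.integrable_mul iU1 iV3
  have vT4 : ∫ ω, (1/2 - X ω^2) * (1/2 - Y ω^2)^3 ∂μ = 0 := by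
    have h : ∫ ω, (1/2 - X ω^2) * (1/2 - Y ω^2)^3 ∂μ
        = (∫ ω, (1/2 - X ω^2) ∂μ) * ∫ ω, (1/2 - Y ω^2)^3 ∂μ :=
      ind13.integral_fun_mul_eq_mul_integral iU1.aestronglyMeasurable iV3.aestronglyMeasurable
    rw [h, vU1, vV3]; ring
  -- the fourth power of the sum
  have eA : (fun ω => ((1/2 - X ω^2) + (1/2 - Y ω^2))^4)
      = fun ω => (1/2 - X ω^2)^4 + 4*((1/2 - X ω^2)^3 * (1/2 - Y ω^2))
        + 6*((1/2 - X ω^2)^2 * (1/2 - Y ω^2)^2) + 4*((1/2 - X ω^2) * (1/2 - Y ω^2)^3)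
        + (1/2 - Y ω^2)^4 := funext fun ω => by ring
  have i1 : Integrable (fun ω => (1/2 - X ω^2)^4
      + 4*((1/2 - X ω^2)^3 * (1/2 - Y ω^2))) μ := iU4.add (iT2.const_mul 4)
  have i2 : Integrable (fun ω => (1/2 - X ω^2)^4
      + 4*((1/2 - X ω^2)^3 * (1/2 - Y ω^2))
      + 6*((1/2 - X ω^2)^2 * (1/2 - Y ω^2)^2)) μ := i1.add (iT3.const_mul 6)
  have i3 : Integrable (fun ω => (1/2 - X ω^2)^4
      + 4*((1/2 - X ω^2)^3 * (1/2 - Y ω^2))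
      + 6*((1/2 - X ω^2)^2 * (1/2 - Y ω^2)^2)
      + 4*((1/2 - X ω^2) * (1/2 - Y ω^2)^3)) μ := i2.add (iT4.const_mul 4)
  have iA : Integrable (fun ω => ((1/2 - X ω^2) + (1/2 - Y ω^2))^4) μ := by
    rw [eA]; exact i3.add iV4
  have vA : ∫ ω, ((1/2 - X ω^2) + (1/2 - Y ω^2))^4 ∂μ = 9 := by
    rw [eA, integral_add i3 iV4, integral_add i2 (iT4.const_mul 4),
      integral_add i1 (iT3.const_mul 6), integral_add iU4 (iT2.const_mul 4),
      integral_const_mul, integral_const_mul, integral_const_mul,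
      vU4, vT2, vT3, vT4, vV4]
    norm_num
  -- the dominating function
  have igA : Integrable (fun ω => 8*c^4*((1/2 - X ω^2) + (1/2 - Y ω^2))^4) μ :=
    iA.const_mul _
  have igX : Integrable (fun ω => 128*c^2*(X ω)^4) μ := iX4.const_mul _
  have ig : Integrable (fun ω => 8*c^4*((1/2 - X ω^2) + (1/2 - Y ω^2))^4
      + 128*c^2*(X ω)^4) μ := igA.add igX
  have vg : ∫ ω, (8*c^4*((1/2 - X ω^2) + (1/2 - Y ω^2))^4 + 128*c^2*(X ω)^4) ∂μ
      = 72*c^4 + 96*c^2 := by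
    rw [integral_add igA igX, integral_const_mul, integral_const_mul, vA, vX4]
    ring
  -- the formula for D
  have hDform : ∀ ω, D ω
      = (c * ((1/2 - X ω^2) + (1/2 - Y ω^2)) + 2*(Real.sqrt c)*X ω) / (1+c) := by
    intro ω
    rw [hD ω, hZ ω]
    have habs : ‖(Real.sqrt c : ℂ) * ((X ω : ℂ) + (Y ω : ℂ) * Complex.I) - 1‖ ^ 2
        = (Real.sqrt c * X ω - 1)^2 + (Real.sqrt c * Y ω)^2 := by
      rw [Complex.sq_norm, Complex.normSq_apply]
      simp
      ring
    rw [habs]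
    have h1c : (1:ℝ) + c ≠ 0 := by positivity
    field_simp
    linear_combination (-2) * ((X ω)^2 + (Y ω)^2) * hs2
  -- pointwise bound
  have key : ∀ ω, D ω ^ 4 ≤ 8*c^4*((1/2 - X ω^2) + (1/2 - Y ω^2))^4 + 128*c^2*(X ω)^4 := by
    intro ω
    rw [hDform ω]
    set a : ℝ := c * ((1/2 - X ω^2) + (1/2 - Y ω^2)) with ha
    set b : ℝ := 2*(Real.sqrt c)*X ω with hb
    have h1c : (1:ℝ) ≤ (1+c)^4 := one_le_pow₀ (by linarith)
    have hd : ((a+b)/(1+c))^4 = (a+b)^4 / (1+c)^4 := div_pow _ _ 4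
    have h4pos : (0:ℝ) ≤ (a+b)^4 := by positivity
    have hle1 : ((a+b)/(1+c))^4 ≤ (a+b)^4 := by
      rw [hd]; exact div_le_self h4pos h1c
    have hle2 : (a+b)^4 ≤ 8*a^4 + 8*b^4 := four_pow_add_le a b
    have ha4 : a^4 = c^4 * ((1/2 - X ω^2) + (1/2 - Y ω^2))^4 := by rw [ha]; ring
    have hb4 : b^4 = 16 * c^2 * (X ω)^4 := by
      rw [hb]
      have h4 : (Real.sqrt c)^4 = c^2 := by
        rw [show (Real.sqrt c)^4 = ((Real.sqrt c)^2)^2 by ring, hs2]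
      calc (2*(Real.sqrt c)*X ω)^4 = 16 * (Real.sqrt c)^4 * (X ω)^4 := by ring
        _ = 16 * c^2 * (X ω)^4 := by rw [h4]
    calc ((a+b)/(1+c))^4 ≤ (a+b)^4 := hle1
      _ ≤ 8*a^4 + 8*b^4 := hle2
      _ = 8*c^4*((1/2 - X ω^2) + (1/2 - Y ω^2))^4 + 128*c^2*(X ω)^4 := by
          rw [ha4, hb4]; ring
  -- conclude
  have hmono : ∫ ω, D ω ^ 4 ∂μ
      ≤ ∫ ω, (8*c^4*((1/2 - X ω^2) + (1/2 - Y ω^2))^4 + 128*c^2*(X ω)^4) ∂μ :=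
    integral_mono_of_nonneg (Filter.Eventually.of_forall fun ω => by positivity) ig
      (Filter.Eventually.of_forall key)
  rw [vg] at hmono
  have h42 : c^4 ≤ c^2 := pow_le_pow_of_le_one hc.le hc1 (by norm_num)
  have hsq : (0:ℝ) ≤ c^2 := sq_nonneg c
  linarith
end
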